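/- The automaton group of automaton 861 is non-contracting: the element c satisfies c(010) = 010, c|_{010} = c, and c has infinite order, hence no finite nucleus exists. -/

import Mathlib

namespace Stmt6


/-- A Mealy automaton over the binary alphabet with state set `S`. -/
structure Mealy (S : Type) where
  /-- transition function -/
  δ : S → Bool → S
  /-- output function -/
  τ : S → Bool → Bool

namespace Mealy

variable {S : Type} (M : Mealy S)

/-- The state reached from `q` after reading the first `n` letters of `w`. -/
def stateAt (q : S) (w : ℕ → Bool) : ℕ → S
  | 0 => q
  | n + 1 => M.δ (stateAt q w n) (w n)

/-- The action of state `q` on infinite words. -/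
def act (q : S) (w : ℕ → Bool) : ℕ → Bool :=
  fun n => M.τ (M.stateAt q w n) (w n)

/-- The inverse automaton (for automata whose output functions are involutions). -/
def inv : Mealy S := ⟨fun q b => M.δ q (M.τ q b), M.τ⟩

theorem stateAt_inv_act (h : ∀ q b, M.τ q (M.τ q b) = b) (q : S) (w : ℕ → Bool) :
    ∀ n, M.inv.stateAt q (M.act q w) n = M.stateAt q w n := by
  intro n
  induction n with
  | zero => rfl
  | succ n ih =>
    show M.inv.δ (M.inv.stateAt q (M.act q w) n) (M.act q w n) = M.δ (M.stateAt q w n) (w n)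
    rw [ih]
    show M.δ (M.stateAt q w n) (M.τ (M.stateAt q w n) (M.τ (M.stateAt q w n) (w n))) = _
    rw [h]

theorem inv_act (h : ∀ q b, M.τ q (M.τ q b) = b) (q : S) (w : ℕ → Bool) :
    M.inv.act q (M.act q w) = w := by
  funext n
  show M.inv.τ (M.inv.stateAt q (M.act q w) n) (M.act q w n) = w n
  rw [stateAt_inv_act M h]
  show M.τ (M.stateAt q w n) (M.τ (M.stateAt q w n) (w n)) = w n
  rw [h]

theorem inv_inv (h : ∀ q b, M.τ q (M.τ q b) = b) : M.inv.inv = M := by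
  obtain ⟨d, t⟩ := M
  simp only [inv]
  congr 1
  funext q b
  exact congrArg (d q) (h q b)

/-- The permutation of the set of infinite binary words defined by state `q`. -/
def perm (h : ∀ q b, M.τ q (M.τ q b) = b) (q : S) : Equiv.Perm (ℕ → Bool) where
  toFun := M.act q
  invFun := M.inv.act q
  left_inv := fun w => M.inv_act h q w
  right_inv := fun w => by
    have h2 : ∀ q b, M.inv.τ q (M.inv.τ q b) = b := h
    have := M.inv.inv_act h2 q w
    rwa [M.inv_inv h] at this

end Mealy

/-- Prepend a finite word to an infinite word. -/
def cat (u : List Bool) (w : ℕ → Bool) : ℕ → Bool :=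
  fun n => u.getD n (w (n - u.length))

/-- The (semantic) restriction of a transformation of infinite words to the
subtree indexed by the finite word `u`. -/
def resW (f : (ℕ → Bool) → ℕ → Bool) (u : List Bool) : (ℕ → Bool) → ℕ → Bool :=
  fun w n => f (cat u w) (n + u.length)

/-- The periodic infinite word with period `u`. -/
def per (u : List Bool) : ℕ → Bool := fun n => u.getD (n % u.length) false

/-- Left-shift equivalence of infinite words: they share a common infinite tail. -/
def seq (u v : ℕ → Bool) : Prop := ∃ k l : ℕ, ∀ n, u (n + k) = v (n + l)

inductive St : Type
  | a | b | c
deriving DecidableEq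

instance : Fintype St := ⟨{.a, .b, .c}, by intro x; cases x <;> simp⟩

/-- Automaton 861. -/
def M : Mealy St where
  δ := fun q x => match q, x with
    | .a, false => .c | .a, true => .b
    | .b, false => .c | .b, true => .b
    | .c, false => .b | .c, true => .a
  τ := fun q x => match q with
    | .a => !x
    | .b => x
    | .c => x

theorem M_inv : ∀ q x, M.τ q (M.τ q x) = x := by decide

/-- The automorphism of the binary tree boundary defined by state `a`. -/
def a : Equiv.Perm (ℕ → Bool) := M.perm M_inv .a

/-- The automorphism of the binary tree boundary defined by state `b`. -/
def b : Equiv.Perm (ℕ → Bool) := M.perm M_inv .b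

/-- The automorphism of the binary tree boundary defined by state `c`. -/
def c : Equiv.Perm (ℕ → Bool) := M.perm M_inv .c

/-! ### Auxiliary material -/

/-- The interleaving embedding `w ↦ 1 w₀ 1 w₁ 1 w₂ ⋯`. -/
def E (w : ℕ → Bool) : ℕ → Bool := fun n => if n % 2 = 0 then true else w (n / 2)

/-- The induced (lamplighter-type) map on the interleaved coordinates. -/
def Cf (w : ℕ → Bool) : ℕ → Bool :=
  fun i => xor (w i) (if i = 0 then true else !(w (i - 1)))

/-- The state of automaton 861, started at `c`, while reading `E w`. -/
def stE (w : ℕ → Bool) : ℕ → St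
  | 0 => .c
  | 1 => .a
  | (n + 2) => if w (n / 2) then .b else (if n % 2 = 0 then .c else .a)

theorem stateAt_E (w : ℕ → Bool) : ∀ n, M.stateAt .c (E w) n = stE w n := by
  intro n
  induction n with
  | zero => rfl
  | succ n ih =>
    show M.δ (M.stateAt .c (E w) n) (E w n) = _
    rw [ih]
    match n with
    | 0 => rfl
    | 1 =>
      show M.δ .a (E w 1) = stE w 2
      have h1 : E w 1 = w 0 := rfl
      rw [h1]
      cases h : w 0 <;> simp [stE, M, Mealy.δ, h]
    | (m + 2) =>
      rcases Nat.even_or_odd m with ⟨i, hi⟩ | ⟨i, hi⟩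
      · subst hi
        have hE : E w (i + i + 2) = true := by
          simp [E]; omega
        have hq : (i + i) / 2 = i := by omega
        have hq2 : (i + i) % 2 = 0 := by omega
        have hq3 : (i + i + 1) / 2 = i := by omega
        have hq4 : ¬ ((i + i + 1) % 2 = 0) := by omega
        rw [hE]
        show M.δ (stE w (i + i + 2)) true = stE w (i + i + 3)
        simp only [stE, hq, hq2, hq3, hq4, if_true, if_false]
        cases h : w i <;> simp [M, Mealy.δ, h]
      · subst hi
        have hE : E w (2 * i + 1 + 2) = w (i + 1) := by
          have : (2 * i + 3) % 2 = 1 := by omega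
          have h2 : (2 * i + 3) / 2 = i + 1 := by omega
          simp [E, this, h2]
        rw [hE]
        show M.δ (stE w (2 * i + 1 + 2)) (w (i + 1)) = stE w (2 * i + 2 + 2)
        have hq : (2 * i + 1) / 2 = i := by omega
        have hq2 : ¬ ((2 * i + 1) % 2 = 0) := by omega
        have hq3 : (2 * i + 2) / 2 = i + 1 := by omega
        have hq4 : (2 * i + 2) % 2 = 0 := by omega
        simp only [stE, hq, hq2, hq3, hq4, if_true, if_false]
        cases h : w i <;> cases h2 : w (i + 1) <;> simp [M, Mealy.δ, h, h2]

/-- Conjugation: on interleaved words, `c` acts as `Cf`. -/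
theorem c_E (w : ℕ → Bool) : c (E w) = E (Cf w) := by
  funext n
  show M.τ (M.stateAt .c (E w) n) (E w n) = E (Cf w) n
  rw [stateAt_E]
  match n with
  | 0 => rfl
  | 1 =>
    show M.τ .a (w 0) = E (Cf w) 1
    have : E (Cf w) 1 = Cf w 0 := rfl
    rw [this]
    cases h : w 0 <;> simp [M, Mealy.τ, Cf, h]
  | (m + 2) =>
    rcases Nat.even_or_odd m with ⟨i, hi⟩ | ⟨i, hi⟩
    · subst hi
      have hE : E w (i + i + 2) = true := by simp [E]; omega
      have hE2 : E (Cf w) (i + i + 2) = true := by simp [E]; omega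
      have hq : (i + i) / 2 = i := by omega
      have hq2 : (i + i) % 2 = 0 := by omega
      rw [hE, hE2]
      simp only [stE, hq, hq2, if_true]
      cases h : w i <;> simp [M, Mealy.τ, h]
    · subst hi
      have hm : (2 * i + 1 + 2) % 2 = 1 := by omega
      have hd : (2 * i + 1 + 2) / 2 = i + 1 := by omega
      have hE : E w (2 * i + 1 + 2) = w (i + 1) := by simp [E, hm, hd]
      have hE2 : E (Cf w) (2 * i + 1 + 2) = Cf w (i + 1) := by simp [E, hm, hd]
      have hq : (2 * i + 1) / 2 = i := by omega
      have hq2 : ¬ ((2 * i + 1) % 2 = 0) := by omega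
      rw [hE, hE2]
      simp only [stE, hq, hq2, if_false]
      have : Cf w (i + 1) = xor (w (i + 1)) (!(w i)) := by simp [Cf]
      rw [this]
      cases h : w i <;> cases h2 : w (i + 1) <;> simp [M, Mealy.τ, h, h2]

theorem E_inj : Function.Injective E := by
  intro u v h
  funext i
  have := congrFun h (2 * i + 1)
  have hm : ¬ ((2 * i + 1) % 2 = 0) := by omega
  have hd : (2 * i + 1) / 2 = i := by omega
  simpa [E, hm, hd] using this

theorem c_iter_E (n : ℕ) (w : ℕ → Bool) : (⇑c)^[n] (E w) = E (Cf^[n] w) := by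
  induction n with
  | zero => rfl
  | succ n ih =>
    rw [Function.iterate_succ_apply', ih, c_E, Function.iterate_succ_apply' Cf n w]

/-- xor of `Cf` values is the "Pascal" linear map. -/
theorem Cf_diff (u v : ℕ → Bool) (i : ℕ) :
    xor (Cf u i) (Cf v i) =
      xor (xor (u i) (v i)) (if i = 0 then false else xor (u (i - 1)) (v (i - 1))) := by
  match i with
  | 0 =>
    simp only [Cf, if_pos rfl]
    cases u 0 <;> cases v 0 <;> rfl
  | (k + 1) =>
    simp only [Cf, Nat.succ_ne_zero, if_false, Nat.add_sub_cancel]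
    cases u (k + 1) <;> cases v (k + 1) <;> cases u k <;> cases v k <;> rfl

def z : ℕ → Bool := fun _ => false
def d0 : ℕ → Bool := fun i => decide (i = 0)

def D (n i : ℕ) : Bool := xor (Cf^[n] d0 i) (Cf^[n] z i)

theorem D_succ (n i : ℕ) :
    D (n + 1) i = xor (D n i) (if i = 0 then false else D n (i - 1)) := by
  simp only [D, Function.iterate_succ_apply']
  exact Cf_diff _ _ i

theorem D_diag : ∀ n, D n n = true ∧ ∀ i, n < i → D n i = false := by
  intro n
  induction n with
  | zero =>
    constructor
    · simp [D, d0, z]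
    · intro i hi
      have hi0 : ¬ (i = 0) := by omega
      simp [D, d0, z, hi0]
  | succ n ih =>
    constructor
    · rw [D_succ]
      have h1 : ¬ (n + 1 = 0) := Nat.succ_ne_zero n
      rw [if_neg h1, Nat.add_sub_cancel, ih.1, ih.2 (n + 1) (Nat.lt_succ_self n)]
      rfl
    · intro i hi
      rw [D_succ]
      match i, hi with
      | (k + 1), hi =>
        rw [if_neg (Nat.succ_ne_zero k), Nat.add_sub_cancel,
          ih.2 (k + 1) (by omega), ih.2 k (by omega)]
        rfl

/-- `c` has infinite order. -/
theorem c_pow_ne_one (n : ℕ) (hn : 1 ≤ n) : c ^ n ≠ 1 := by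
  intro h
  have hfix : ∀ w : ℕ → Bool, Cf^[n] w = w := by
    intro w
    apply E_inj
    rw [← c_iter_E, ← Equiv.Perm.coe_pow, h]
    rfl
  have hD : D n n = false := by
    simp only [D, hfix d0, hfix z, d0, z]
    have : ¬ (n = 0) := by omega
    simp [this]
  rw [(D_diag n).1] at hD
  exact Bool.noConfusion hD

/-! ### restriction along (010)^j -/

theorem cat_past (u : List Bool) (x : ℕ → Bool) (m : ℕ) : cat u x (m + u.length) = x m := by
  simp only [cat]
  rw [List.getD_eq_default _ _ (Nat.le_add_left _ _), Nat.add_sub_cancel]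

theorem stateAt_cat010 (w : ℕ → Bool) :
    ∀ n, M.stateAt .c (cat [false, true, false] w) (n + 3) = M.stateAt .c w n := by
  intro n
  induction n with
  | zero => rfl
  | succ n ih =>
    show M.δ (M.stateAt .c (cat [false, true, false] w) (n + 3))
        (cat [false, true, false] w (n + 3)) = _
    rw [ih]
    have : cat [false, true, false] w (n + 3) = w n := by
      have := cat_past [false, true, false] w n
      simpa using this
    rw [this]
    rfl

theorem c_cat010 (w : ℕ → Bool) :
    c (cat [false, true, false] w) = cat [false, true, false] (c w) := by
  funext n
  match n with
  | 0 => rfl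
  | 1 => rfl
  | 2 => rfl
  | (m + 3) =>
    show M.τ (M.stateAt .c (cat [false, true, false] w) (m + 3))
        (cat [false, true, false] w (m + 3)) = _
    rw [stateAt_cat010]
    have h1 : cat [false, true, false] w (m + 3) = w m := by
      simpa using cat_past [false, true, false] w m
    have h2 : cat [false, true, false] (c w) (m + 3) = c w m := by
      simpa using cat_past [false, true, false] (c w) m
    rw [h1, h2]
    rfl

theorem cpow_cat010 (n : ℕ) (w : ℕ → Bool) :
    (⇑(c ^ n)) (cat [false, true, false] w) = cat [false, true, false] ((⇑(c ^ n)) w) := by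
  induction n generalizing w with
  | zero => rfl
  | succ n ih =>
    rw [pow_succ]
    show (⇑(c ^ n)) (c (cat [false, true, false] w)) = _
    rw [c_cat010, ih]
    rfl

/-- `(010)^j`. -/
def U : ℕ → List Bool
  | 0 => []
  | (j + 1) => false :: true :: false :: U j

theorem U_length (j : ℕ) : (U j).length = 3 * j := by
  induction j with
  | zero => rfl
  | succ j ih => simp [U, ih]; omega

theorem cat_nil (w : ℕ → Bool) : cat [] w = w := by
  funext n
  simp [cat]

theorem cat_split (v : List Bool) (w : ℕ → Bool) :
    cat (false :: true :: false :: v) w = cat [false, true, false] (cat v w) := by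
  funext n
  match n with
  | 0 => rfl
  | 1 => rfl
  | 2 => rfl
  | (m + 3) =>
    show (false :: true :: false :: v).getD (m + 3)
        (w (m + 3 - (false :: true :: false :: v).length)) = _
    have hlen : (false :: true :: false :: v).length = v.length + 3 := by simp
    rw [hlen]
    simp only [List.getD_cons_succ]
    show v.getD m (w (m + 3 - (v.length + 3))) = cat [false, true, false] (cat v w) (m + 3)
    have h2 : cat [false, true, false] (cat v w) (m + 3) = cat v w m := by
      simpa using cat_past [false, true, false] (cat v w) m
    rw [h2]
    show v.getD m (w (m + 3 - (v.length + 3))) = v.getD m (w (m - v.length))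
    congr 2
    omega

theorem cpow_catU (n j : ℕ) (w : ℕ → Bool) :
    (⇑(c ^ n)) (cat (U j) w) = cat (U j) ((⇑(c ^ n)) w) := by
  induction j generalizing w with
  | zero =>
    show (⇑(c ^ n)) (cat [] w) = cat [] ((⇑(c ^ n)) w)
    rw [cat_nil, cat_nil]
  | succ j ih =>
    show (⇑(c ^ n)) (cat (false :: true :: false :: U j) w) = _
    rw [cat_split, cpow_cat010, ih, ← cat_split]
    rfl

theorem resW_cpow (n j : ℕ) : resW (⇑(c ^ n)) (U j) = ⇑(c ^ n) := by
  funext w m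
  show (⇑(c ^ n)) (cat (U j) w) (m + (U j).length) = _
  rw [cpow_catU, cat_past]

/-- The automaton group of automaton 861 is non-contracting: `c(010) = 010`,
`c|₀₁₀ = c`, `c` has infinite order, and hence no finite nucleus exists. -/
theorem automaton861_noncontracting :
    (∀ w : ℕ → Bool, c (cat [false, true, false] w) = cat [false, true, false] (c w)) ∧
    (∀ n : ℕ, 1 ≤ n → c ^ n ≠ 1) ∧
    ¬ ∃ N : Finset (Equiv.Perm (ℕ → Bool)),
      ∀ g ∈ Subgroup.closure ({a, b, c} : Set (Equiv.Perm (ℕ → Bool))),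
        ∃ k : ℕ, ∀ u : List Bool, k ≤ u.length → ∃ m ∈ N, resW ⇑g u = ⇑m := by
  refine ⟨c_cat010, c_pow_ne_one, ?_⟩
  rintro ⟨N, hN⟩
  have hc : c ∈ Subgroup.closure ({a, b, c} : Set (Equiv.Perm (ℕ → Bool))) :=
    Subgroup.subset_closure (by simp)
  have hmem : ∀ n : ℕ, c ^ n ∈ N := by
    intro n
    obtain ⟨k, hk⟩ := hN (c ^ n) (pow_mem hc n)
    obtain ⟨m, hmN, hm⟩ := hk (U k) (by rw [U_length]; omega)
    have hcoe : ⇑(c ^ n) = ⇑m := by rw [← hm, resW_cpow]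
    have hcm : c ^ n = m := Equiv.coe_fn_injective hcoe
    rwa [hcm]
  have hinj : Function.Injective fun n : ℕ => c ^ n := by
    intro i j hij
    by_contra hne
    wlog hlt : i < j generalizing i j
    · exact this hij.symm (Ne.symm hne) (by omega)
    simp only at hij
    have h1 : c ^ i * c ^ (j - i) = c ^ i * 1 := by
      rw [mul_one, ← pow_add]
      rw [hij]
      congr 1
      omega
    have h2 : c ^ (j - i) = 1 := mul_left_cancel h1
    exact c_pow_ne_one (j - i) (by omega) h2
  have hinf : (Set.range fun n : ℕ => c ^ n).Infinite := Set.infinite_range_of_injective hinj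
  apply hinf
  apply N.finite_toSet.subset
  rintro x ⟨n, rfl⟩
  exact hmem n

end Stmt6
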